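/- Fix an unsatisfiable CNF formula F with n variables and integers w, s ≥ 1 with 2^n ≥ s ≥ 6nw, and let k, the blocks B*_0,…,B*_{n−k} of [s*], the blocks B_0,…,B_{n−k} of [s], the bijection t, and the family 𝓗 be as defined. Then for every h ∈ 𝓗 and all u, v ∈ Dom(h)∖{0}: (1) h(u) ≠ 0 and h(v) ≠ 0; (2) if L*(h(v)) ∈ Img(h), then h^{−1}(L*(h(v))) < v; (3) if R*(h(v)) ∈ Img(h), then h^{−1}(R*(h(v))) < v. -/
import Mathlib


/-! ## Clauses, CNFs and Resolution -/

/-- A clause over variables of type `α`: a finite set of literals `(x, b)`,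
where `(x, true)` is the positive literal `X` and `(x, false)` is `¬X`. -/
abbrev Clause (α : Type) := Finset (α × Bool)

/-- A clause is non-tautological if it contains no variable together with its negation. -/
def Clause.Nontaut {α : Type} (C : Clause α) : Prop :=
  ∀ x : α, ¬((x, true) ∈ C ∧ (x, false) ∈ C)

/-- A Resolution refutation of the set of clauses `F`: a nonempty sequence of
non-tautological clauses, each of which is a weakening (i.e. a superset) of a clause
of `F`, or a weakening of a resolvent `(D_v ∖ {X}) ∪ (D_w ∖ {¬X})` of two earlier
clauses `D_v, D_w` with `X ∈ D_v` and `¬X ∈ D_w`; the last clause is empty.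
The length of the refutation is the length of the list. -/
def IsResRefutation {α : Type} [DecidableEq α] (F : Set (Clause α)) (P : List (Clause α)) : Prop :=
  P ≠ [] ∧
  (∀ u : Fin P.length,
      Clause.Nontaut (P.get u) ∧
      ((∃ C ∈ F, C ⊆ P.get u) ∨
        ∃ v w : Fin P.length, (v : ℕ) < (u : ℕ) ∧ (w : ℕ) < (u : ℕ) ∧ ∃ x : α,
          (x, true) ∈ P.get v ∧ (x, false) ∈ P.get w ∧
          ((P.get v).erase (x, true) ∪ (P.get w).erase (x, false)) ⊆ P.get u)) ∧
  P.getLast? = some (∅ : Clause α)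

/-- Satisfiability of a set of clauses. -/
def CnfSat {α : Type} (S : Set (Clause α)) : Prop :=
  ∃ a : α → Bool, ∀ C ∈ S, ∃ l ∈ C, a l.1 = l.2

/-- The size of a CNF: the sum of the sizes (numbers of literals) of its clauses. -/
noncomputable def cnfSize {α : Type} (S : Set (Clause α)) : ℕ :=
  ∑ᶠ C ∈ S, Finset.card C

/-! ## Restrictions (partial assignments) -/

/-- The restriction (partial assignment) `ρ` satisfies the clause `C` (i.e. `C↾ρ = 1`). -/
def Clause.SatByR {α : Type} (ρ : α → Option Bool) (C : Clause α) : Prop :=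
  ∃ l ∈ C, ρ l.1 = some l.2

/-- The restriction `ρ` falsifies the clause `C` (i.e. `C↾ρ = 0`). -/
def Clause.FalsByR {α : Type} (ρ : α → Option Bool) (C : Clause α) : Prop :=
  ∀ l ∈ C, ρ l.1 = some (!l.2)

/-- The clause `C↾ρ` (relevant when `C` is neither satisfied nor falsified):
remove from `C` all falsified literals. -/
def Clause.restrictBy {α : Type} [DecidableEq α] (ρ : α → Option Bool) (C : Clause α) :
    Clause α :=
  C.filter (fun l => ρ l.1 ≠ some (!l.2))

/-- `F↾ρ` for a set of clauses `F`: it contains `C↾ρ` for those `C ∈ F` neither satisfied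
nor falsified by `ρ`, together with the empty clause if some `C ∈ F` is falsified by `ρ`. -/
def cnfRestrict {α : Type} [DecidableEq α] (ρ : α → Option Bool) (S : Set (Clause α)) :
    Set (Clause α) :=
  { E | ∃ C ∈ S, ¬Clause.SatByR ρ C ∧ ¬Clause.FalsByR ρ C ∧ E = Clause.restrictBy ρ C } ∪
  { E | E = (∅ : Clause α) ∧ ∃ C ∈ S, Clause.FalsByR ρ C }

open scoped Classical in
/-- `Π↾ρ` for a sequence of clauses: remove the satisfied clauses (the `1`s) and replace
the falsified ones (the `0`s) by the empty clause. -/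
noncomputable def seqRestrict {α : Type} [DecidableEq α] (ρ : α → Option Bool)
    (P : List (Clause α)) : List (Clause α) :=
  (P.filter (fun C => decide (¬Clause.SatByR ρ C))).map
    (fun C => if Clause.FalsByR ρ C then (∅ : Clause α) else Clause.restrictBy ρ C)

/-- The partial assignment `σ` extends the partial assignment `ρ`. -/
def optExtends {α : Type} (ρ σ : α → Option Bool) : Prop :=
  ∀ x b, ρ x = some b → σ x = some b

/-! ## CNFs with an explicit enumeration of clauses -/

/-- A CNF formula with variables `X_1, …, X_n` (indices in `Finset.Icc 1 n`) given with an
explicit enumeration `Cl 1, …, Cl m` of its clauses. -/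
structure CNFFam where
  n : ℕ
  m : ℕ
  Cl : ℕ → Clause ℕ

namespace CNFFam

/-- Well-formedness: the clauses `C_1, …, C_m` are non-tautological, pairwise distinct
(they enumerate a set of clauses), and use only the variables `X_1, …, X_n`. -/
def WF (F : CNFFam) : Prop :=
  (∀ j ∈ Finset.Icc 1 F.m, Clause.Nontaut (F.Cl j) ∧ ∀ l ∈ F.Cl j, l.1 ∈ Finset.Icc 1 F.n) ∧
  (∀ j ∈ Finset.Icc 1 F.m, ∀ j' ∈ Finset.Icc 1 F.m, F.Cl j = F.Cl j' → j = j')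

/-- The underlying set of clauses. -/
def clauseSet (F : CNFFam) : Set (Clause ℕ) :=
  { C | ∃ j ∈ Finset.Icc 1 F.m, C = F.Cl j }

/-- `F` is satisfiable. -/
def Sat (F : CNFFam) : Prop := CnfSat F.clauseSet

/-- `F` is a 3-CNF: all clauses have size at most 3. -/
def Is3CNF (F : CNFFam) : Prop := ∀ j ∈ Finset.Icc 1 F.m, (F.Cl j).card ≤ 3

end CNFFam

/-! ## The variables of the formulas REF and RREF -/

/-- The propositional variables of `REF(F,s)` and `RREF(F,s)`. -/
inductive RefVar : Type where
  | D (u i : ℕ) (b : Bool)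
  | V (u i : ℕ)
  | I (u j : ℕ)
  | L (u v : ℕ)
  | R (u v : ℕ)
  | P (u : ℕ)
deriving DecidableEq

abbrev VClause := Clause RefVar

/-- The index mentioned by a variable: `D[u,i,b], V[u,i], I[u,j], L[u,v], R[u,v], P[u]`
all mention the index `u`. -/
def RefVar.idx : RefVar → ℕ
  | .D u _ _ => u
  | .V u _ => u
  | .I u _ => u
  | .L u _ => u
  | .R u _ => u
  | .P u => u

/-- The positive literal on a variable. -/
def pLit (x : RefVar) : RefVar × Bool := (x, true)

/-- The negative literal on a variable. -/
def nLit (x : RefVar) : RefVar × Bool := (x, false)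

/-- The index-width of a clause: the number of indices mentioned by its variables. -/
def idxWidth (C : VClause) : ℕ := (C.image (fun l => RefVar.idx l.1)).card

/-! ## The clauses of REF and RREF -/

namespace Ref

/-- (A1) `V[u,0] ∨ V[u,1] ∨ ⋯ ∨ V[u,n]`. -/
def A1 (F : CNFFam) (A : Finset ℕ) : Set VClause :=
  { C | ∃ u ∈ A, C = (Finset.range (F.n + 1)).image (fun i => pLit (.V u i)) }

/-- (A2) `I[u,0] ∨ I[u,1] ∨ ⋯ ∨ I[u,m]`. -/
def A2 (F : CNFFam) (A : Finset ℕ) : Set VClause :=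
  { C | ∃ u ∈ A, C = (Finset.range (F.m + 1)).image (fun j => pLit (.I u j)) }

/-- (A3) `L[u,0] ∨ L[u,1] ∨ ⋯ ∨ L[u,s]` (disjunction over the index set and 0). -/
def A3 (A : Finset ℕ) : Set VClause :=
  { C | ∃ u ∈ A, C = (insert 0 A).image (fun v => pLit (.L u v)) }

/-- (A4) `R[u,0] ∨ R[u,1] ∨ ⋯ ∨ R[u,s]`. -/
def A4 (A : Finset ℕ) : Set VClause :=
  { C | ∃ u ∈ A, C = (insert 0 A).image (fun v => pLit (.R u v)) }

/-- (A5) `¬V[u,i] ∨ ¬V[u,i']`, `i ≠ i'`. -/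
def A5 (F : CNFFam) (A : Finset ℕ) : Set VClause :=
  { C | ∃ u ∈ A, ∃ i ∈ Finset.range (F.n + 1), ∃ i' ∈ Finset.range (F.n + 1),
      i ≠ i' ∧ C = {nLit (.V u i), nLit (.V u i')} }

/-- (A6) `¬I[u,j] ∨ ¬I[u,j']`, `j ≠ j'`. -/
def A6 (F : CNFFam) (A : Finset ℕ) : Set VClause :=
  { C | ∃ u ∈ A, ∃ j ∈ Finset.range (F.m + 1), ∃ j' ∈ Finset.range (F.m + 1),
      j ≠ j' ∧ C = {nLit (.I u j), nLit (.I u j')} }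

/-- (A7) `¬L[u,v] ∨ ¬L[u,v']`, `v ≠ v'`. -/
def A7 (A : Finset ℕ) : Set VClause :=
  { C | ∃ u ∈ A, ∃ v ∈ insert 0 A, ∃ v' ∈ insert 0 A,
      v ≠ v' ∧ C = {nLit (.L u v), nLit (.L u v')} }

/-- (A8) `¬R[u,v] ∨ ¬R[u,v']`, `v ≠ v'`. -/
def A8 (A : Finset ℕ) : Set VClause :=
  { C | ∃ u ∈ A, ∃ v ∈ insert 0 A, ∃ v' ∈ insert 0 A,
      v ≠ v' ∧ C = {nLit (.R u v), nLit (.R u v')} }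

/-- (A9) `¬I[u,0] ∨ ¬V[u,0]`. -/
def A9 (A : Finset ℕ) : Set VClause := { C | ∃ u ∈ A, C = {nLit (.I u 0), nLit (.V u 0)} }

/-- (A10) `I[u,0] ∨ V[u,0]`. -/
def A10 (A : Finset ℕ) : Set VClause := { C | ∃ u ∈ A, C = {pLit (.I u 0), pLit (.V u 0)} }

/-- (A11) `¬I[u,0] ∨ ¬L[u,0]`. -/
def A11 (A : Finset ℕ) : Set VClause := { C | ∃ u ∈ A, C = {nLit (.I u 0), nLit (.L u 0)} }

/-- (A12) `¬I[u,0] ∨ ¬R[u,0]`. -/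
def A12 (A : Finset ℕ) : Set VClause := { C | ∃ u ∈ A, C = {nLit (.I u 0), nLit (.R u 0)} }

/-- (A13) `¬L[u,v]` for `u ≤ v`. -/
def A13 (A : Finset ℕ) : Set VClause :=
  { C | ∃ u ∈ A, ∃ v ∈ A, u ≤ v ∧ C = {nLit (.L u v)} }

/-- (A14) `¬R[u,v]` for `u ≤ v`. -/
def A14 (A : Finset ℕ) : Set VClause :=
  { C | ∃ u ∈ A, ∃ v ∈ A, u ≤ v ∧ C = {nLit (.R u v)} }

/-- (A15) `¬L[u,v] ∨ ¬V[u,i] ∨ D[v,i,0]`. -/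
def A15 (F : CNFFam) (A : Finset ℕ) : Set VClause :=
  { C | ∃ u ∈ A, ∃ v ∈ A, ∃ i ∈ Finset.Icc 1 F.n,
      C = {nLit (.L u v), nLit (.V u i), pLit (.D v i false)} }

/-- (A16) `¬R[u,v] ∨ ¬V[u,i] ∨ D[v,i,1]`. -/
def A16 (F : CNFFam) (A : Finset ℕ) : Set VClause :=
  { C | ∃ u ∈ A, ∃ v ∈ A, ∃ i ∈ Finset.Icc 1 F.n,
      C = {nLit (.R u v), nLit (.V u i), pLit (.D v i true)} }

/-- (A17) `¬L[u,v] ∨ ¬V[u,i] ∨ ¬D[v,i',b] ∨ D[u,i',b]`, `i' ≠ i`. -/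
def A17 (F : CNFFam) (A : Finset ℕ) : Set VClause :=
  { C | ∃ u ∈ A, ∃ v ∈ A, ∃ i ∈ Finset.Icc 1 F.n, ∃ i' ∈ Finset.Icc 1 F.n, ∃ b : Bool,
      i' ≠ i ∧ C = {nLit (.L u v), nLit (.V u i), nLit (.D v i' b), pLit (.D u i' b)} }

/-- (A18) `¬R[u,v] ∨ ¬V[u,i] ∨ ¬D[v,i',b] ∨ D[u,i',b]`, `i' ≠ i`. -/
def A18 (F : CNFFam) (A : Finset ℕ) : Set VClause :=
  { C | ∃ u ∈ A, ∃ v ∈ A, ∃ i ∈ Finset.Icc 1 F.n, ∃ i' ∈ Finset.Icc 1 F.n, ∃ b : Bool,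
      i' ≠ i ∧ C = {nLit (.R u v), nLit (.V u i), nLit (.D v i' b), pLit (.D u i' b)} }

/-- (A19) `¬I[u,j] ∨ D[u,i,b]` for `X_i^{(b)} ∈ C_j`. -/
def A19 (F : CNFFam) (A : Finset ℕ) : Set VClause :=
  { C | ∃ u ∈ A, ∃ j ∈ Finset.Icc 1 F.m, ∃ i : ℕ, ∃ b : Bool,
      (i, b) ∈ F.Cl j ∧ C = {nLit (.I u j), pLit (.D u i b)} }

/-- (A20) `¬D[u,i,0] ∨ ¬D[u,i,1]`. -/
def A20 (F : CNFFam) (A : Finset ℕ) : Set VClause :=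
  { C | ∃ u ∈ A, ∃ i ∈ Finset.Icc 1 F.n, C = {nLit (.D u i false), nLit (.D u i true)} }

/-- (A21) `¬D[s,i,b]` (for the last index `t`). -/
def A21 (F : CNFFam) (t : ℕ) : Set VClause :=
  { C | ∃ i ∈ Finset.Icc 1 F.n, ∃ b : Bool, C = {nLit (.D t i b)} }

/-- (A22) `¬P[u] ∨ ¬L[u,v] ∨ P[v]`. -/
def A22 (A : Finset ℕ) : Set VClause :=
  { C | ∃ u ∈ A, ∃ v ∈ A, C = {nLit (.P u), nLit (.L u v), pLit (.P v)} }

/-- (A23) `¬P[u] ∨ ¬R[u,v] ∨ P[v]`. -/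
def A23 (A : Finset ℕ) : Set VClause :=
  { C | ∃ u ∈ A, ∃ v ∈ A, C = {nLit (.P u), nLit (.R u v), pLit (.P v)} }

/-- (A24) `P[s]` (for the last index `t`). -/
def A24 (t : ℕ) : Set VClause := { C | C = {pLit (.P t)} }

end Ref

/-- The formula `REF(F, A)` with index set `A` (in place of `[s]`) and last index `t`
(in the role of `s`): the clauses (A1)–(A21). -/
def REFA (F : CNFFam) (A : Finset ℕ) (t : ℕ) : Set VClause :=
  Ref.A1 F A ∪ Ref.A2 F A ∪ Ref.A3 A ∪ Ref.A4 A ∪ Ref.A5 F A ∪ Ref.A6 F A ∪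
    Ref.A7 A ∪ Ref.A8 A ∪ Ref.A9 A ∪ Ref.A10 A ∪ Ref.A11 A ∪ Ref.A12 A ∪ Ref.A13 A ∪
    Ref.A14 A ∪ Ref.A15 F A ∪ Ref.A16 F A ∪ Ref.A17 F A ∪ Ref.A18 F A ∪ Ref.A19 F A ∪
    Ref.A20 F A ∪ Ref.A21 F t

/-- The formula `REF(F, s)`. -/
def REF (F : CNFFam) (s : ℕ) : Set VClause := REFA F (Finset.Icc 1 s) s

/-- Relativization of a clause: add the literal `¬P[u]` for every index `u` mentioned
by a variable occurring in the clause. -/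
def relCl (C : VClause) : VClause :=
  C ∪ (C.image (fun l => RefVar.idx l.1)).image (fun u => nLit (.P u))

/-- The formula `RREF(F, s)`: the relativized clauses of `REF(F,s)` together with the
clauses (A22), (A23) and (A24). -/
def RREF (F : CNFFam) (s : ℕ) : Set VClause :=
  (relCl '' REF F s) ∪ Ref.A22 (Finset.Icc 1 s) ∪ Ref.A23 (Finset.Icc 1 s) ∪ Ref.A24 s

/-- `REF(F,s)` with the clauses of types (A7) and (A8) deleted. -/
def REFnoLR (F : CNFFam) (s : ℕ) : Set VClause :=
  Ref.A1 F (Finset.Icc 1 s) ∪ Ref.A2 F (Finset.Icc 1 s) ∪ Ref.A3 (Finset.Icc 1 s) ∪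
    Ref.A4 (Finset.Icc 1 s) ∪ Ref.A5 F (Finset.Icc 1 s) ∪ Ref.A6 F (Finset.Icc 1 s) ∪
    Ref.A9 (Finset.Icc 1 s) ∪ Ref.A10 (Finset.Icc 1 s) ∪ Ref.A11 (Finset.Icc 1 s) ∪
    Ref.A12 (Finset.Icc 1 s) ∪ Ref.A13 (Finset.Icc 1 s) ∪ Ref.A14 (Finset.Icc 1 s) ∪
    Ref.A15 F (Finset.Icc 1 s) ∪ Ref.A16 F (Finset.Icc 1 s) ∪ Ref.A17 F (Finset.Icc 1 s) ∪
    Ref.A18 F (Finset.Icc 1 s) ∪ Ref.A19 F (Finset.Icc 1 s) ∪ Ref.A20 F (Finset.Icc 1 s) ∪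
    Ref.A21 F s

/-- `RREF'(F,s)`: obtained from `RREF(F,s)` by deleting the (relativized) clauses of
types (A7) and (A8). -/
def RREF' (F : CNFFam) (s : ℕ) : Set VClause :=
  (relCl '' REFnoLR F s) ∪ Ref.A22 (Finset.Icc 1 s) ∪ Ref.A23 (Finset.Icc 1 s) ∪ Ref.A24 s

/-! ## Refutations as structures -/

/-- A structure `(D, V, I, L, R)` of the type of a length-`s` refutation. -/
structure RefStruct where
  Dr : ℕ → ℕ → Bool → Bool
  Vf : ℕ → ℕ
  If' : ℕ → ℕ
  Lf : ℕ → ℕ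
  Rf : ℕ → ℕ

namespace RefStruct

/-- The typing conditions: `D ⊆ [s]×[n]×B`, `V : [s] → [n]∪{0}`, `I : [s] → [m]∪{0}`,
`L, R : [s] → [s]∪{0}`. -/
def WFOn (M : RefStruct) (s n m : ℕ) : Prop :=
  (∀ u i b, M.Dr u i b = true → u ∈ Finset.Icc 1 s ∧ i ∈ Finset.Icc 1 n) ∧
  (∀ u ∈ Finset.Icc 1 s, M.Vf u ≤ n) ∧
  (∀ u ∈ Finset.Icc 1 s, M.If' u ≤ m) ∧
  (∀ u ∈ Finset.Icc 1 s, M.Lf u ≤ s) ∧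
  (∀ u ∈ Finset.Icc 1 s, M.Rf u ≤ s)

/-- (R1)–(R8): the structure is a refutation of `F` of length `s`. -/
def IsRefutationOf (M : RefStruct) (F : CNFFam) (s : ℕ) : Prop :=
  ∀ u ∈ Finset.Icc 1 s,
    ((M.Vf u = 0 ∨ M.If' u = 0) ∧ ¬(M.Vf u = 0 ∧ M.If' u = 0)) ∧
    (M.If' u = 0 → M.Lf u ≠ 0 ∧ M.Rf u ≠ 0) ∧
    (M.Lf u < u ∧ M.Rf u < u) ∧
    (∀ i ∈ Finset.Icc 1 F.n, ∀ v ∈ Finset.Icc 1 s,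
      (M.Vf u = i → M.Lf u = v → M.Dr v i false = true) ∧
      (M.Vf u = i → M.Rf u = v → M.Dr v i true = true) ∧
      (∀ i' ∈ Finset.Icc 1 F.n, ∀ b : Bool,
        M.Vf u = i → i ≠ i' → M.Lf u = v → M.Dr v i' b = true → M.Dr u i' b = true) ∧
      (∀ i' ∈ Finset.Icc 1 F.n, ∀ b : Bool,
        M.Vf u = i → i ≠ i' → M.Rf u = v → M.Dr v i' b = true → M.Dr u i' b = true)) ∧
    (∀ j ∈ Finset.Icc 1 F.m, ∀ i : ℕ, ∀ b : Bool,
      M.If' u = j → (i, b) ∈ F.Cl j → M.Dr u i b = true) ∧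
    (∀ i ∈ Finset.Icc 1 F.n, ¬(M.Dr u i false = true ∧ M.Dr u i true = true)) ∧
    (∀ i ∈ Finset.Icc 1 F.n, ∀ b : Bool, M.Dr s i b = false)

/-- The truth assignment associated to a structure. -/
def assign (M : RefStruct) : RefVar → Bool
  | .D u i b => M.Dr u i b
  | .V u i => M.Vf u == i
  | .I u j => M.If' u == j
  | .L u v => M.Lf u == v
  | .R u v => M.Rf u == v
  | .P _ => true

end RefStruct

/-! ## The full-tree refutation -/

/-- The level `h` of the node numbered `u` in the full binary tree with `n+1` levels. -/
def levelOf (n u : ℕ) : ℕ := Nat.log 2 (2 ^ (n + 1) - u)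

/-- The value (position within its level, `a₁` most significant) of the node numbered `u`. -/
def valOf (n u : ℕ) : ℕ := u - (2 ^ (n + 1) + 1 - 2 ^ (levelOf n u + 1))

/-- The `i`-th bit `a_i` of the binary string `a` labelling the node numbered `u`. -/
def digitOf (n u i : ℕ) : Bool := (valOf n u).testBit (levelOf n u - i)

/-- The clause `C_a = X_1^{(a_1)} ∨ ⋯ ∨ X_n^{(a_n)}` labelling the leaf numbered `u`. -/
def leafClause (F : CNFFam) (u : ℕ) : Clause ℕ :=
  (Finset.Icc 1 F.n).image (fun i => (i, digitOf F.n u i))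

/-- The full-tree Resolution refutation `(D*, V*, I*, L*, R*)` of `F`,
of length `s* = 2^{n+1} - 1`. -/
noncomputable def fullTree (F : CNFFam) : RefStruct where
  Dr := fun u i b =>
    decide (1 ≤ u ∧ u ≤ 2 ^ (F.n + 1) - 1 ∧ 1 ≤ i ∧ i ≤ levelOf F.n u) &&
      (digitOf F.n u i == b)
  Vf := fun u =>
    if 1 ≤ u ∧ u ≤ 2 ^ (F.n + 1) - 1 ∧ levelOf F.n u < F.n then levelOf F.n u + 1 else 0
  If' := fun u =>
    if 1 ≤ u ∧ u ≤ 2 ^ (F.n + 1) - 1 ∧ levelOf F.n u = F.n then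
      sInf { j : ℕ | j ∈ Finset.Icc 1 F.m ∧ F.Cl j ⊆ leafClause F u }
    else 0
  Lf := fun u =>
    if 1 ≤ u ∧ u ≤ 2 ^ (F.n + 1) - 1 ∧ levelOf F.n u < F.n then
      2 ^ (F.n + 1) + 1 + 2 * valOf F.n u - 2 ^ (levelOf F.n u + 2)
    else 0
  Rf := fun u =>
    if 1 ≤ u ∧ u ≤ 2 ^ (F.n + 1) - 1 ∧ levelOf F.n u < F.n then
      2 ^ (F.n + 1) + 2 + 2 * valOf F.n u - 2 ^ (levelOf F.n u + 2)
    else 0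

/-! ## Blocks, the family 𝓗, and conditions -/

/-- The integer `k` with `2^k < 3w ≤ 2^{k+1}`. -/
def kOf (w : ℕ) : ℕ := Nat.log 2 (3 * w - 1)

/-- The block `B*_i` of `[s*]`, `s* = 2^{n+1} - 1`. -/
def Bstar (n w i : ℕ) : Finset ℕ :=
  let s' := 2 ^ (n + 1) - 1
  let k := kOf w
  if i = 0 then Finset.Icc (s' - 2 ^ (k + 1) + 2) s'
  else Finset.Icc (s' + 2 - 2 ^ (k + 1 + i)) (s' - 2 ^ (k + i) + 1)

/-- The block `B_i` of `[s]`. -/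
def Bblk (n s w i : ℕ) : Finset ℕ :=
  let k := kOf w
  if i = 0 then Finset.Icc (s - 2 ^ (k + 1) + 2) s
  else if i = n - k then Finset.Icc 1 (s - 2 ^ (k + 1) * (n - k) + 1)
  else Finset.Icc (s - 2 ^ (k + 1) * (i + 1) + 2) (s - 2 ^ (k + 1) * i + 1)

/-- The bijection `t : B_0 → B*_0`, `t(u) = u - s + s*`. -/
def tmap (n s u : ℕ) : ℕ := u + (2 ^ (n + 1) - 1 - s)

/-- `h` (a set of pairs) is a partial function. -/
def pfun (h : Finset (ℕ × ℕ)) : Prop :=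
  ∀ p ∈ h, ∀ q ∈ h, p.1 = q.1 → p.2 = q.2

/-- The domain of a partial function given as a set of pairs. -/
def pdom (h : Finset (ℕ × ℕ)) : Finset ℕ := h.image Prod.fst

/-- The image of a partial function given as a set of pairs. -/
def pimg (h : Finset (ℕ × ℕ)) : Finset ℕ := h.image Prod.snd

/-- Membership in the family `𝓗`: injective partial functions
`h : [s]∪{0} → [s*]∪{0}` satisfying (H1)–(H4). -/
def memH (n s w : ℕ) (h : Finset (ℕ × ℕ)) : Prop :=
  pfun h ∧
  (∀ p ∈ h, p.1 ∈ insert 0 (Finset.Icc 1 s) ∧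
    p.2 ∈ insert 0 (Finset.Icc 1 (2 ^ (n + 1) - 1))) ∧
  (∀ p ∈ h, ∀ q ∈ h, p.2 = q.2 → p.1 = q.1) ∧
  ((0, 0) ∈ h) ∧
  (∀ p ∈ h, p.1 ∈ Bblk n s w 0 → p.2 = tmap n s p.1) ∧
  (∀ p ∈ h, ∀ i ∈ Finset.Icc 1 (n - kOf w), p.1 ∈ Bblk n s w i → p.2 ∈ Bstar n w i)

/-- `∂I = {L*(u) | u ∈ I∖{0}} ∪ {R*(u) | u ∈ I∖{0}}`. -/
noncomputable def bnd (F : CNFFam) (I : Finset ℕ) : Finset ℕ :=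
  (I.erase 0).image (fullTree F).Lf ∪ (I.erase 0).image (fullTree F).Rf

/-- A condition: a pair `p = (g, h)` of members of `𝓗` with (C1) `g ⊆ h` and
(C2) `Img(h) = Img(g) ∪ ∂Img(g)`. -/
def IsCond (F : CNFFam) (s w : ℕ) (g h : Finset (ℕ × ℕ)) : Prop :=
  memH F.n s w g ∧ memH F.n s w h ∧ g ⊆ h ∧ pimg h = pimg g ∪ bnd F (pimg g)

/-- Application of a partial function given as a set of pairs. -/
noncomputable def papp (g : Finset (ℕ × ℕ)) (u : ℕ) : ℕ := sInf { v : ℕ | (u, v) ∈ g }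

/-- Inverse application of an (injective) partial function given as a set of pairs. -/
noncomputable def pinv (h : Finset (ℕ × ℕ)) (y : ℕ) : ℕ := sInf { u : ℕ | (u, y) ∈ h }

/-- The partial assignment `α(p)` determined by a condition `p = (g, h)`: it is defined
precisely on the variables (of `REF(F,s)`) mentioning some `u ∈ Dom(g) ∖ {0}`, where it is
read off from the full-tree refutation through `g` (and `h` for the `L`- and `R`-variables). -/
noncomputable def alphaP (F : CNFFam) (g h : Finset (ℕ × ℕ)) : RefVar → Option Bool :=
  fun x =>
    if RefVar.idx x ∈ (pdom g).erase 0 then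
      match x with
      | RefVar.D u i b => some ((fullTree F).assign (RefVar.D (papp g u) i b))
      | RefVar.V u i => some ((fullTree F).assign (RefVar.V (papp g u) i))
      | RefVar.I u j => some ((fullTree F).assign (RefVar.I (papp g u) j))
      | RefVar.L u v => some (decide (v = pinv h ((fullTree F).Lf (papp g u))))
      | RefVar.R u v => some (decide (v = pinv h ((fullTree F).Rf (papp g u))))
      | RefVar.P _ => none
    else none

open scoped Classical in
/-- The restriction `p↾I` of a condition `p = (g,h)`: `g'` is the restriction of `g` to
`I ∪ {0}` and `h'` is the restriction of `h` with image `Img(g') ∪ ∂Img(g')`. -/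
noncomputable def condRestrict (F : CNFFam) (g h : Finset (ℕ × ℕ)) (I : Finset ℕ) :
    Finset (ℕ × ℕ) × Finset (ℕ × ℕ) :=
  let g' := g.filter (fun p => p.1 ∈ insert 0 I)
  let h' := h.filter (fun p => p.2 ∈ pimg g' ∪ bnd F (pimg g'))
  (g', h')


lemma levelOf_bounds (n u : ℕ) (h1 : 1 ≤ u) (h2 : u ≤ 2 ^ (n + 1) - 1) :
    levelOf n u ≤ n ∧ 2 ^ (n + 1) - 2 ^ (levelOf n u + 1) < u ∧ u ≤ 2 ^ (n + 1) - 2 ^ (levelOf n u) := by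
  have hP : 1 ≤ 2 ^ (n + 1) := Nat.one_le_two_pow
  have hlev : levelOf n u = Nat.log 2 (2 ^ (n + 1) - u) := rfl
  have hd1 : 1 ≤ 2 ^ (n + 1) - u := by omega
  have hlow : 2 ^ (levelOf n u) ≤ 2 ^ (n + 1) - u := by
    rw [hlev]; exact Nat.pow_log_le_self 2 (by omega)
  have hhigh : 2 ^ (n + 1) - u < 2 ^ (levelOf n u + 1) := by
    rw [hlev]; exact Nat.lt_pow_succ_log_self (by norm_num) _
  have hln : levelOf n u < n + 1 := by
    have := (Nat.pow_lt_pow_iff_right (a := 2) (by norm_num)).mp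
      (lt_of_le_of_lt hlow (by omega : 2 ^ (n + 1) - u < 2 ^ (n + 1)))
    exact this
  exact ⟨by omega, by omega, by omega⟩

lemma levelOf_eq_of (n u ℓ : ℕ) (hu : 2 ^ (n + 1) - 2 ^ (ℓ + 1) < u)
    (hu2 : u ≤ 2 ^ (n + 1) - 2 ^ ℓ) (hl : ℓ ≤ n) : levelOf n u = ℓ := by
  have h1 : 2 ^ (ℓ + 1) ≤ 2 ^ (n + 1) := Nat.pow_le_pow_right (by norm_num) (by omega)
  have h2 : (2:ℕ) ^ (ℓ + 1) = 2 * 2 ^ ℓ := by ring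
  show Nat.log 2 (2 ^ (n + 1) - u) = ℓ
  apply Nat.log_eq_of_pow_le_of_lt_pow <;> omega

lemma child_spec (n x c : ℕ) (hx1 : 1 ≤ x) (hx2 : x ≤ 2 ^ (n + 1) - 1)
    (hlt : levelOf n x < n) (hc1 : 1 ≤ c) (hc2 : c ≤ 2) :
    1 ≤ 2 ^ (n + 1) + c + 2 * valOf n x - 2 ^ (levelOf n x + 2) ∧
    2 ^ (n + 1) + c + 2 * valOf n x - 2 ^ (levelOf n x + 2) < x ∧
    2 ^ (n + 1) + c + 2 * valOf n x - 2 ^ (levelOf n x + 2) ≤ 2 ^ (n + 1) - 1 ∧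
    levelOf n (2 ^ (n + 1) + c + 2 * valOf n x - 2 ^ (levelOf n x + 2)) = levelOf n x + 1 := by
  obtain ⟨hl, hb1, hb2⟩ := levelOf_bounds n x hx1 hx2
  have hV : valOf n x = x - (2 ^ (n + 1) + 1 - 2 ^ (levelOf n x + 1)) := rfl
  set ℓ := levelOf n x with hℓ
  have e1 : (2:ℕ) ^ (ℓ + 1) = 2 * 2 ^ ℓ := by ring
  have e2 : (2:ℕ) ^ (ℓ + 2) = 4 * 2 ^ ℓ := by ring
  have e3 : (2:ℕ) ^ (ℓ + 2) ≤ 2 ^ (n + 1) := Nat.pow_le_pow_right (by norm_num) (by omega)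
  have hLlo : 2 ^ (n + 1) - 2 ^ (ℓ + 2) < 2 ^ (n + 1) + c + 2 * valOf n x - 2 ^ (ℓ + 2) := by omega
  have hLhi : 2 ^ (n + 1) + c + 2 * valOf n x - 2 ^ (ℓ + 2) ≤ 2 ^ (n + 1) - 2 ^ (ℓ + 1) := by omega
  refine ⟨by omega, by omega, by omega, ?_⟩
  exact levelOf_eq_of n _ (ℓ + 1) (by omega) (by omega) (by omega)

lemma bblk_zero (n s w : ℕ) : Bblk n s w 0 = Finset.Icc (s - 2 ^ (kOf w + 1) + 2) s := rfl
lemma bstar_zero (n w : ℕ) :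
    Bstar n w 0 = Finset.Icc (2 ^ (n + 1) - 1 - 2 ^ (kOf w + 1) + 2) (2 ^ (n + 1) - 1) := rfl
lemma bstar_pos (n w i : ℕ) (hi : i ≠ 0) :
    Bstar n w i = Finset.Icc (2 ^ (n + 1) - 1 + 2 - 2 ^ (kOf w + 1 + i))
      (2 ^ (n + 1) - 1 - 2 ^ (kOf w + i) + 1) := by
  simp [Bstar, hi]
lemma bblk_pos (n s w i : ℕ) (hi : i ≠ 0) (hne : i ≠ n - kOf w) :
    Bblk n s w i = Finset.Icc (s - 2 ^ (kOf w + 1) * (i + 1) + 2)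
      (s - 2 ^ (kOf w + 1) * i + 1) := by
  simp [Bblk, hi, hne]
lemma bblk_last (n s w : ℕ) (h : n - kOf w ≠ 0) :
    Bblk n s w (n - kOf w) = Finset.Icc 1 (s - 2 ^ (kOf w + 1) * (n - kOf w) + 1) := by
  simp [Bblk, h]

lemma bblk_cover (n s w : ℕ) (hkn : kOf w + 1 ≤ n)
    (hKs : 2 ^ (kOf w + 1) * (n - kOf w) + 2 ≤ s) (v : ℕ) (hv1 : 1 ≤ v) (hv2 : v ≤ s) :
    ∃ i, i ≤ n - kOf w ∧ v ∈ Bblk n s w i := by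
  have hK1 : 1 ≤ 2 ^ (kOf w + 1) := Nat.one_le_two_pow
  have hKK : 2 ^ (kOf w + 1) ≤ 2 ^ (kOf w + 1) * (n - kOf w) :=
    Nat.le_mul_of_pos_right _ (by omega)
  by_cases h0 : s + 1 - v < 2 ^ (kOf w + 1)
  · exact ⟨0, by omega, by rw [bblk_zero, Finset.mem_Icc]; omega⟩
  · have hdm := Nat.div_add_mod (s + 1 - v) (2 ^ (kOf w + 1))
    have hmd := Nat.mod_lt (s + 1 - v) (y := 2 ^ (kOf w + 1)) (by omega)
    have hi1 : 1 ≤ (s + 1 - v) / 2 ^ (kOf w + 1) :=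
      (Nat.one_le_div_iff (by omega)).mpr (by omega)
    by_cases hlast : n - kOf w ≤ (s + 1 - v) / 2 ^ (kOf w + 1)
    · refine ⟨n - kOf w, le_refl _, ?_⟩
      rw [bblk_last n s w (by omega), Finset.mem_Icc]
      have h1 : 2 ^ (kOf w + 1) * (n - kOf w) ≤
          2 ^ (kOf w + 1) * ((s + 1 - v) / 2 ^ (kOf w + 1)) :=
        Nat.mul_le_mul_left _ hlast
      omega
    · refine ⟨(s + 1 - v) / 2 ^ (kOf w + 1), by omega, ?_⟩
      rw [bblk_pos n s w _ (by omega) (by omega), Finset.mem_Icc]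
      have h1 : 2 ^ (kOf w + 1) * ((s + 1 - v) / 2 ^ (kOf w + 1) + 1) ≤
          2 ^ (kOf w + 1) * (n - kOf w) := Nat.mul_le_mul_left _ (by omega)
      have h2 : 2 ^ (kOf w + 1) * ((s + 1 - v) / 2 ^ (kOf w + 1) + 1) =
          2 ^ (kOf w + 1) * ((s + 1 - v) / 2 ^ (kOf w + 1)) + 2 ^ (kOf w + 1) := by ring
      omega

lemma bblk_lt (n s w i j u v : ℕ) (hkn : kOf w + 1 ≤ n)
    (hKs : 2 ^ (kOf w + 1) * (n - kOf w) + 2 ≤ s) (hij : i < j) (hj : j ≤ n - kOf w)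
    (hu : u ∈ Bblk n s w i) (hv : v ∈ Bblk n s w j) : v < u := by
  have hK1 : 1 ≤ 2 ^ (kOf w + 1) := Nat.one_le_two_pow
  have hKK : 2 ^ (kOf w + 1) ≤ 2 ^ (kOf w + 1) * (n - kOf w) :=
    Nat.le_mul_of_pos_right _ (by omega)
  have hvU : v ≤ s - 2 ^ (kOf w + 1) * j + 1 := by
    by_cases hjl : j = n - kOf w
    · rw [hjl] at hv; rw [bblk_last n s w (by omega), Finset.mem_Icc] at hv
      rw [hjl]; omega
    · rw [bblk_pos n s w j (by omega) hjl, Finset.mem_Icc] at hv; omega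
  have huL : s - 2 ^ (kOf w + 1) * (i + 1) + 2 ≤ u := by
    by_cases hi0 : i = 0
    · subst hi0; rw [bblk_zero, Finset.mem_Icc] at hu
      have h3 : 2 ^ (kOf w + 1) * (0 + 1) = 2 ^ (kOf w + 1) := by ring
      omega
    · rw [bblk_pos n s w i hi0 (by omega), Finset.mem_Icc] at hu; omega
  have h1 : 2 ^ (kOf w + 1) * (i + 1) ≤ 2 ^ (kOf w + 1) * j :=
    Nat.mul_le_mul_left _ (by omega)
  have h2 : 2 ^ (kOf w + 1) * j ≤ 2 ^ (kOf w + 1) * (n - kOf w) :=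
    Nat.mul_le_mul_left _ hj
  omega

lemma tmap_mem (n s w y : ℕ) (hs2 : s ≤ 2 ^ (n + 1) - 1) (hy : y ∈ Bblk n s w 0) :
    tmap n s y ∈ Bstar n w 0 := by
  rw [bblk_zero, Finset.mem_Icc] at hy
  rw [bstar_zero, Finset.mem_Icc]
  have : 1 ≤ 2 ^ (kOf w + 1) := Nat.one_le_two_pow
  unfold tmap; omega

lemma bstar_level_le (n w L : ℕ) (hkn : kOf w + 1 ≤ n) (hL : L ∈ Bstar n w 0) :
    levelOf n L ≤ kOf w := by
  rw [bstar_zero, Finset.mem_Icc] at hL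
  have h1 : 2 ^ (kOf w + 1) ≤ 2 ^ (n + 1) := Nat.pow_le_pow_right (by norm_num) (by omega)
  have h2 : 1 ≤ 2 ^ (kOf w + 1) := Nat.one_le_two_pow
  have h3 : 1 ≤ 2 ^ (n + 1) := Nat.one_le_two_pow
  have h4 : 2 ^ (n + 1) - L < 2 ^ (kOf w + 1) := by omega
  have h5 : Nat.log 2 (2 ^ (n + 1) - L) < kOf w + 1 := Nat.log_lt_of_lt_pow (by omega) h4
  exact Nat.lt_succ_iff.mp h5

lemma bstar_level_pos (n w j L : ℕ) (hj1 : 1 ≤ j) (hjn : kOf w + j ≤ n)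
    (hL : L ∈ Bstar n w j) : levelOf n L = kOf w + j := by
  rw [bstar_pos n w j (by omega), Finset.mem_Icc] at hL
  have e0 : kOf w + 1 + j = kOf w + j + 1 := by omega
  rw [e0] at hL
  have e1 : (2:ℕ) ^ (kOf w + j + 1) = 2 * 2 ^ (kOf w + j) := by ring
  have e2 : 2 ^ (kOf w + j + 1) ≤ 2 ^ (n + 1) := Nat.pow_le_pow_right (by norm_num) (by omega)
  exact levelOf_eq_of n L (kOf w + j) (by omega) (by omega) (by omega)

lemma lfrf_spec (F : CNFFam) (x : ℕ) (hx1 : 1 ≤ x) (hx2 : x ≤ 2 ^ (F.n + 1) - 1)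
    (f : ℕ → ℕ) (hf : f = (fullTree F).Lf ∨ f = (fullTree F).Rf) (hne : f x ≠ 0) :
    levelOf F.n x < F.n ∧ 1 ≤ f x ∧ f x < x ∧ f x ≤ 2 ^ (F.n + 1) - 1 ∧
      levelOf F.n (f x) = levelOf F.n x + 1 := by
  by_cases hlt : levelOf F.n x < F.n
  · have hcond : 1 ≤ x ∧ x ≤ 2 ^ (F.n + 1) - 1 ∧ levelOf F.n x < F.n := ⟨hx1, hx2, hlt⟩
    rcases hf with rfl | rfl
    · have he : (fullTree F).Lf x =
          2 ^ (F.n + 1) + 1 + 2 * valOf F.n x - 2 ^ (levelOf F.n x + 2) := by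
        simp only [fullTree]; rw [if_pos hcond]
      rw [he]
      have hcs := child_spec F.n x 1 hx1 hx2 hlt (by norm_num) (by norm_num)
      exact ⟨hlt, hcs.1, hcs.2.1, hcs.2.2.1, hcs.2.2.2⟩
    · have he : (fullTree F).Rf x =
          2 ^ (F.n + 1) + 2 + 2 * valOf F.n x - 2 ^ (levelOf F.n x + 2) := by
        simp only [fullTree]; rw [if_pos hcond]
      rw [he]
      have hcs := child_spec F.n x 2 hx1 hx2 hlt (by norm_num) (by norm_num)
      exact ⟨hlt, hcs.1, hcs.2.1, hcs.2.2.1, hcs.2.2.2⟩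
  · exfalso; apply hne
    have hcond : ¬(1 ≤ x ∧ x ≤ 2 ^ (F.n + 1) - 1 ∧ levelOf F.n x < F.n) := by tauto
    rcases hf with rfl | rfl
    · simp only [fullTree]; rw [if_neg hcond]
    · simp only [fullTree]; rw [if_neg hcond]


/-! ## Statement 8 -/

/-- Claim 1: for an unsatisfiable CNF `F` with `n` variables, integers `w, s ≥ 1` with
`2^n ≥ s ≥ 6nw`, and every `h ∈ 𝓗` and `u, v ∈ Dom(h) ∖ {0}`:
(1) `h(u) ≠ 0` (and `h(v) ≠ 0`);
(2) if `L*(h(v)) ∈ Img(h)` then `h⁻¹(L*(h(v))) < v`;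
(3) if `R*(h(v)) ∈ Img(h)` then `h⁻¹(R*(h(v))) < v`. -/
theorem claim_obvious (F : CNFFam) (hWF : F.WF) (hunsat : ¬F.Sat) (w s : ℕ)
    (hn : 1 ≤ F.n) (hw : 1 ≤ w) (hs : 1 ≤ s)
    (hlow : 6 * F.n * w ≤ s) (hhigh : s ≤ 2 ^ F.n)
    (h : Finset (ℕ × ℕ)) (hh : memH F.n s w h) :
    (∀ u x, (u, x) ∈ h → u ≠ 0 → x ≠ 0) ∧
    (∀ v x, (v, x) ∈ h → v ≠ 0 → ∀ y, (y, (fullTree F).Lf x) ∈ h → y < v) ∧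
    (∀ v x, (v, x) ∈ h → v ≠ 0 → ∀ y, (y, (fullTree F).Rf x) ∈ h → y < v) := by
  obtain ⟨hpf, hdom, hinj, h00, hH3, hH4⟩ := hh
  have hw2 : 2 ≤ 3 * w := by omega
  have hk : 2 ^ kOf w ≤ 3 * w - 1 := Nat.pow_log_le_self 2 (by omega)
  have h6 : 6 * w ≤ 6 * F.n * w := by
    calc 6 * w = 6 * 1 * w := by ring
      _ ≤ 6 * F.n * w := Nat.mul_le_mul_right w (by omega)
  have hK6 : 2 ^ (kOf w + 1) ≤ 6 * w - 2 := by
    have : (2:ℕ) ^ (kOf w + 1) = 2 * 2 ^ kOf w := by ring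
    omega
  have hkn : kOf w + 1 ≤ F.n := by
    by_contra hc
    push_neg at hc
    have h1 : 2 ^ F.n ≤ 2 ^ kOf w := Nat.pow_le_pow_right (by norm_num) (by omega)
    omega
  have hKs : 2 ^ (kOf w + 1) * (F.n - kOf w) + 2 * F.n ≤ s := by
    obtain ⟨c, hc⟩ : ∃ c, 6 * w = c + 2 := ⟨6 * w - 2, by omega⟩
    have h1 : 2 ^ (kOf w + 1) * (F.n - kOf w) ≤ c * F.n :=
      Nat.mul_le_mul (by omega) (Nat.sub_le _ _)
    have h2 : c * F.n + 2 * F.n = 6 * F.n * w := by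
      calc c * F.n + 2 * F.n = (c + 2) * F.n := by ring
        _ = (6 * w) * F.n := by rw [hc]
        _ = 6 * F.n * w := by ring
    omega
  have hKs2 : 2 ^ (kOf w + 1) * (F.n - kOf w) + 2 ≤ s := by omega
  have hsP : s ≤ 2 ^ (F.n + 1) - 1 := by
    have e1 : (2:ℕ) ^ (F.n + 1) = 2 * 2 ^ F.n := by ring
    have e2 : 1 ≤ 2 ^ F.n := Nat.one_le_two_pow
    omega
  have part1 : ∀ u x, (u, x) ∈ h → u ≠ 0 → x ≠ 0 := by
    intro u x hux hu0 hx0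
    subst hx0
    exact hu0 (hinj (u, 0) hux (0, 0) h00 rfl)
  have key : ∀ f : ℕ → ℕ, (f = (fullTree F).Lf ∨ f = (fullTree F).Rf) →
      ∀ v x, (v, x) ∈ h → v ≠ 0 → ∀ y, (y, f x) ∈ h → y < v := by
    intro f hfor v x hvx hv0 y hyf
    have hvs : 1 ≤ v ∧ v ≤ s := by
      have := (hdom (v, x) hvx).1
      simp only [Finset.mem_insert, Finset.mem_Icc] at this
      omega
    have hx0 : x ≠ 0 := part1 v x hvx hv0
    have hxs : 1 ≤ x ∧ x ≤ 2 ^ (F.n + 1) - 1 := by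
      have := (hdom (v, x) hvx).2
      simp only [Finset.mem_insert, Finset.mem_Icc] at this
      omega
    by_cases hf0 : f x = 0
    · rw [hf0] at hyf
      have : y = 0 := hinj (y, 0) hyf (0, 0) h00 rfl
      omega
    · obtain ⟨hlt, hL1, hLx, hLs, hLlev⟩ := lfrf_spec F x hxs.1 hxs.2 f hfor hf0
      have hy0 : y ≠ 0 := by
        intro hy; subst hy
        exact hf0 (hpf (0, f x) hyf (0, 0) h00 rfl)
      have hys : 1 ≤ y ∧ y ≤ s := by
        have := (hdom (y, f x) hyf).1
        simp only [Finset.mem_insert, Finset.mem_Icc] at this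
        omega
      obtain ⟨i, hi, hvB⟩ := bblk_cover F.n s w hkn hKs2 v hvs.1 hvs.2
      obtain ⟨j, hj, hyB⟩ := bblk_cover F.n s w hkn hKs2 y hys.1 hys.2
      by_cases hi0 : i = 0
      · subst hi0
        by_cases hj0 : j = 0
        · subst hj0
          have hx' : x = tmap F.n s v := hH3 (v, x) hvx hvB
          have hL' : f x = tmap F.n s y := hH3 (y, f x) hyf hyB
          unfold tmap at hx' hL'
          omega
        · exact bblk_lt F.n s w 0 j v y hkn hKs2 (by omega) hj hvB hyB
      · have hxB : x ∈ Bstar F.n w i :=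
          hH4 (v, x) hvx i (Finset.mem_Icc.mpr ⟨by omega, hi⟩) hvB
        have hlx : levelOf F.n x = kOf w + i :=
          bstar_level_pos F.n w i x (by omega) (by omega) hxB
        by_cases hj0 : j = 0
        · subst hj0
          have hL' : f x = tmap F.n s y := hH3 (y, f x) hyf hyB
          have hmem : f x ∈ Bstar F.n w 0 := by
            rw [hL']; exact tmap_mem F.n s w y hsP hyB
          have := bstar_level_le F.n w (f x) hkn hmem
          omega
        · have hLB : f x ∈ Bstar F.n w j :=
            hH4 (y, f x) hyf j (Finset.mem_Icc.mpr ⟨by omega, hj⟩) hyB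
          have hlj : levelOf F.n (f x) = kOf w + j :=
            bstar_level_pos F.n w j (f x) (by omega) (by omega) hLB
          exact bblk_lt F.n s w i j v y hkn hKs2 (by omega) hj hvB hyB
  exact ⟨part1, key _ (Or.inl rfl), key _ (Or.inr rfl)⟩
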